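/- Let ζ(n) = ψ(n+ρ) - ψ(ρ) for ρ > 0, where ψ is the digamma function, so ζ(n) = ∑_{j=0}^{n-1} 1/(ρ+j). Then for all r ≥ 0 and d ≥ 1, the d-th forward difference satisfies (-1)^{d+1}(Δ^d ζ)(r) = Γ(ρ+r)Γ(d)/Γ(ρ+r+d) = B(ρ+r, d), where B is the Beta function. -/

import Mathlib

/-- d-th order forward difference of a sequence: (Δ^d ζ)(r) = ∑_{j=0}^d (-1)^{d-j} C(d,j) ζ(r+j). -/
noncomputable def fdiff (ζ : ℕ → ℝ) (d r : ℕ) : ℝ :=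
  ∑ j ∈ Finset.range (d + 1), (-1 : ℝ) ^ (d - j) * (d.choose j : ℝ) * ζ (r + j)

lemma fdiff_eq_iter (ζ : ℕ → ℝ) (d r : ℕ) :
    fdiff ζ d r = (fwdDiff 1)^[d] ζ r := by
  rw [fwdDiff_iter_eq_sum_shift, fdiff]
  refine Finset.sum_congr rfl fun k _ => ?_
  simp [smul_eq_mul, mul_assoc]

theorem stmt_11 (ρ : ℝ) (hρ : 0 < ρ) (ζ : ℕ → ℝ)
    (hζ : ∀ n, ζ n = ∑ j ∈ Finset.range n, 1 / (ρ + j))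
    (r d : ℕ) (hd : 1 ≤ d) :
    (-1 : ℝ) ^ (d + 1) * fdiff ζ d r =
      Real.Gamma (ρ + r) * Real.Gamma d / Real.Gamma (ρ + r + d) := by
  induction d generalizing r with
  | zero => omega
  | succ d ih =>
    have hx : ∀ s : ℕ, (0:ℝ) < ρ + s := fun s => by positivity
    rcases Nat.eq_or_lt_of_le hd with h1 | h1
    · -- d + 1 = 1, i.e. d = 0
      have hd0 : d = 0 := by omega
      subst hd0
      have hstep : fdiff ζ 1 r = ζ (r + 1) - ζ r := by
        simp [fdiff, Finset.sum_range_succ]; ring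
      rw [hstep, hζ, hζ, Finset.sum_range_succ]
      have hΓ : Real.Gamma (ρ + r + 1) = (ρ + r) * Real.Gamma (ρ + r) :=
        Real.Gamma_add_one (hx r).ne'
      push_cast
      rw [hΓ, Real.Gamma_one]
      have := (Real.Gamma_pos_of_pos (hx r)).ne'
      field_simp; ring
    · have hd' : 1 ≤ d := by omega
      have step : fdiff ζ (d + 1) r = fdiff ζ d (r + 1) - fdiff ζ d r := by
        rw [fdiff_eq_iter, fdiff_eq_iter, fdiff_eq_iter, Function.iterate_succ_apply',
          fwdDiff]
      have key := ih r hd'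
      have key' := ih (r + 1) hd'
      have hcast : (ρ : ℝ) + ((r : ℕ) + 1 : ℕ) = ρ + r + 1 := by push_cast; ring
      rw [hcast] at key'
      have hΓ2 : Real.Gamma (ρ + r + ((d:ℝ) + 1)) = (ρ + r + d) * Real.Gamma (ρ + r + d) := by
        rw [show ρ + r + ((d:ℝ) + 1) = (ρ + r + d) + 1 by ring]
        exact Real.Gamma_add_one (by positivity)
      have hΓ3 : Real.Gamma ((d:ℝ) + 1) = d * Real.Gamma d := by
        have hd0 : (0:ℝ) < d := by exact_mod_cast hd'
        exact Real.Gamma_add_one hd0.ne'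
      have hΓ1' : Real.Gamma (ρ + r + 1 + d) = (ρ + r + d) * Real.Gamma (ρ + r + d) := by
        rw [show ρ + r + 1 + (d:ℝ) = (ρ + r + d) + 1 by ring]
        exact Real.Gamma_add_one (by positivity)
      rw [hΓ1'] at key'
      have hΓ4 : Real.Gamma (ρ + r + 1) = (ρ + r) * Real.Gamma (ρ + r) :=
        Real.Gamma_add_one (hx r).ne'
      rw [hΓ4] at key'
      have hsign : (-1 : ℝ) ^ (d + 1 + 1) = -(-1 : ℝ) ^ (d + 1) := by ring
      rw [step, hsign]
      push_cast
      rw [hΓ2, hΓ3]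
      have hre : -(-1:ℝ) ^ (d + 1) * fdiff ζ d (r + 1) - -(-1:ℝ) ^ (d + 1) * fdiff ζ d r
          = (-1:ℝ) ^ (d + 1) * fdiff ζ d r - (-1:ℝ) ^ (d + 1) * fdiff ζ d (r + 1) := by ring
      rw [show -(-1:ℝ) ^ (d + 1) * (fdiff ζ d (r + 1) - fdiff ζ d r)
          = -(-1:ℝ) ^ (d + 1) * fdiff ζ d (r + 1) - -(-1:ℝ) ^ (d + 1) * fdiff ζ d r by ring,
        hre, key, key']
      have g1 := (Real.Gamma_pos_of_pos (hx r)).ne'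
      have g2 := (Real.Gamma_pos_of_pos (show (0:ℝ) < ρ + r + d by positivity)).ne'
      have g3 : (ρ + (r:ℝ) + d) ≠ 0 := by positivity
      field_simp; ring
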